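/- (Theorem 1) For every integer r ≥ 1 and every n ≥ 1, all complex zeros of the polynomial Z_n are real and negative; that is, if z ∈ ℂ satisfies Z_n(z) = 0, then z is real and z < 0. -/

import Mathlib

open Polynomial

/-- The partition function of the 1d classical Rydberg blockade chain with `n` sites and
blockade radius `r`:  `Z_n(y) = Σ_{m=0}^{⌊(n+r)/(r+1)⌋} C(n - r(m-1), m) y^m`. -/
noncomputable def Z (r n : ℕ) : Polynomial ℝ :=
  ∑ m ∈ Finset.range ((n + r) / (r + 1) + 1),
    Polynomial.C ((Nat.choose (n - r * (m - 1)) m : ℝ)) * Polynomial.X ^ m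


namespace Zaux

/-- degree -/
def dd (r n : ℕ) : ℕ := (n + r) / (r + 1)

lemma choose_eq_zero_of_dd_lt {r n m : ℕ} (hm : dd r n < m) :
    Nat.choose (n - r * (m - 1)) m = 0 := by
  apply Nat.choose_eq_zero_of_lt
  have h : n + r < m * (r + 1) := (Nat.div_lt_iff_lt_mul (Nat.succ_pos r)).1 hm
  have hm1 : 1 ≤ m := le_trans (Nat.succ_le_succ (Nat.zero_le _)) hm
  have e1 : m * (r + 1) = m * r + m := by ring
  have e2 : r * (m - 1) + r = m * r := by
    cases m with
    | zero => omega
    | succ k => simp only [Nat.succ_sub_one]; ring_nf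
  omega

lemma Z_coeff (r n k : ℕ) : (Z r n).coeff k = (Nat.choose (n - r * (k - 1)) k : ℝ) := by
  rw [Z, Polynomial.finset_sum_coeff]
  simp only [Polynomial.coeff_C_mul, Polynomial.coeff_X_pow, mul_ite, mul_one, mul_zero]
  have : ∀ x ∈ Finset.range ((n + r) / (r + 1) + 1),
      (if k = x then ((Nat.choose (n - r * (x - 1)) x : ℝ)) else 0)
      = (if k = x then ((Nat.choose (n - r * (k - 1)) k : ℝ)) else 0) := by
    intro x _; split <;> simp_all
  rw [Finset.sum_congr rfl this, Finset.sum_ite_eq]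
  split
  · rfl
  · next h =>
    have hlt : dd r n < k := by
      rcases Nat.lt_or_ge (dd r n) k with h' | h'
      · exact h'
      · exact absurd (Finset.mem_range.2 (Nat.lt_succ_of_le h')) h
    rw [choose_eq_zero_of_dd_lt hlt]; simp

lemma dd_pos {r n : ℕ} (hn : 1 ≤ n) : 1 ≤ dd r n :=
  Nat.le_div_iff_mul_le (Nat.succ_pos r) |>.2 (by omega)

lemma dd_mono (r : ℕ) : Monotone (dd r) := fun a b h =>
  Nat.div_le_div_right (by omega)

lemma dd_sub (r n : ℕ) (hn : 1 ≤ n) : dd r (n - (r + 1)) = dd r n - 1 := by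
  rcases Nat.lt_or_ge n (r + 1) with h | h
  · have h1 : n - (r + 1) = 0 := by omega
    have h2 : dd r n = 1 := by
      unfold dd; exact Nat.div_eq_of_lt_le (by omega) (by omega)
    have h3 : dd r 0 = 0 := by
      unfold dd; exact Nat.div_eq_of_lt_le (by omega) (by omega)
    rw [h1, h2, h3]
  · unfold dd
    have h1 : n - (r + 1) + r + (r + 1) = n + r := by omega
    have h2 : (n - (r + 1) + r + (r + 1)) / (r + 1) = (n - (r + 1) + r) / (r + 1) + 1 :=
      Nat.add_div_right _ (by omega)
    rw [← h1, h2, Nat.add_sub_cancel]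

end Zaux

namespace Zaux

lemma choose_id (r n m : ℕ) (hn : 1 ≤ n) (hm : 1 ≤ m) :
    Nat.choose (n - r * (m - 1)) m
      = Nat.choose ((n - 1) - r * (m - 1)) m
        + Nat.choose ((n - (r + 1)) - r * (m - 1 - 1)) (m - 1) := by
  match m, hm with
  | 1, _ =>
    simp only [Nat.sub_self, Nat.mul_zero, Nat.sub_zero, Nat.choose_one_right, Nat.choose_zero_right]
    omega
  | (k+2), _ =>
    have e0 : k + 2 - 1 = k + 1 := rfl
    have e1 : k + 1 - 1 = k := rfl
    rw [e0, e1]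
    have e2 : r * (k + 1) = r * k + r := by ring
    have e3 : (n - (r + 1)) - r * k = n - r * (k + 1) - 1 := by omega
    have e4 : (n - 1) - r * (k + 1) = n - r * (k + 1) - 1 := by omega
    rw [e3, e4]
    rcases Nat.eq_zero_or_pos (n - r * (k + 1)) with h | h
    · rw [h]
      simp [Nat.choose_eq_zero_of_lt]
    · obtain ⟨b, hb⟩ : ∃ b, n - r * (k + 1) = b + 1 := ⟨n - r * (k+1) - 1, by omega⟩
      rw [hb, Nat.add_sub_cancel]
      have h5 : (b + 1).choose (k + 2) = b.choose (k + 1) + b.choose (k + 2) :=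
        Nat.choose_succ_succ b (k + 1)
      rw [h5, Nat.add_comm]

lemma Z_rec (r n : ℕ) (hn : 1 ≤ n) : Z r n = Z r (n - 1) + X * Z r (n - (r + 1)) := by
  ext k
  rw [Polynomial.coeff_add, Z_coeff]
  cases k with
  | zero =>
    rw [Z_coeff]
    simp
  | succ k =>
    rw [Polynomial.coeff_X_mul, Z_coeff, Z_coeff]
    have := choose_id r n (k + 1) hn (by omega)
    have e : k + 1 - 1 = k := rfl
    rw [e] at this ⊢
    exact_mod_cast this

end Zaux

namespace Zaux

lemma top_ge (r n : ℕ) : dd r n ≤ n - r * (dd r n - 1) := by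
  rcases Nat.eq_zero_or_pos (dd r n) with h | h
  · simp [h]
  · obtain ⟨s, hs⟩ : ∃ s, dd r n = s + 1 := ⟨dd r n - 1, by omega⟩
    have h1 : dd r n * (r + 1) ≤ n + r := Nat.div_mul_le_self _ _
    rw [hs] at h1 ⊢
    have e : (s + 1) * (r + 1) = r * s + r + s + 1 := by ring
    simp only [Nat.add_sub_cancel]
    omega

lemma Z_coeff_dd_pos (r n : ℕ) : 0 < (Z r n).coeff (dd r n) := by
  rw [Z_coeff]
  exact_mod_cast Nat.choose_pos (top_ge r n)

lemma Z_natDegree (r n : ℕ) : (Z r n).natDegree = dd r n := by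
  apply le_antisymm
  · rw [Polynomial.natDegree_le_iff_coeff_eq_zero]
    intro k hk
    rw [Z_coeff, choose_eq_zero_of_dd_lt hk]
    simp
  · exact Polynomial.le_natDegree_of_ne_zero (ne_of_gt (Z_coeff_dd_pos r n))

lemma Z_leadingCoeff_pos (r n : ℕ) : 0 < (Z r n).leadingCoeff := by
  rw [Polynomial.leadingCoeff, Z_natDegree]; exact Z_coeff_dd_pos r n

lemma Z_ne_zero (r n : ℕ) : Z r n ≠ 0 := fun h => by
  have := Z_leadingCoeff_pos r n
  rw [h] at this; simp at this

lemma Z_eval_zero (r n : ℕ) : (Z r n).eval 0 = 1 := by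
  rw [← Polynomial.coeff_zero_eq_eval_zero, Z_coeff]
  simp

lemma Z_zero_eq (r : ℕ) : Z r 0 = Polynomial.C 1 := by
  have h0 : dd r 0 = 0 := Nat.div_eq_of_lt_le (by omega) (by omega)
  have h := Polynomial.eq_C_of_natDegree_eq_zero (by rw [Z_natDegree, h0])
  rw [h, show (Z r 0).coeff 0 = 1 from by rw [Z_coeff]; simp]

end Zaux

namespace Zaux

def Good (r n : ℕ) (x : ℕ → ℝ) : Prop :=
  (∀ j, j < dd r n → x j < 0) ∧
  (∀ j, j + 1 < dd r n → x (j + 1) < x j) ∧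
  Z r n = Polynomial.C ((Z r n).leadingCoeff)
      * ∏ j ∈ Finset.range (dd r n), (X - Polynomial.C (x j))

lemma good_anti {r n : ℕ} {x : ℕ → ℝ} (h : Good r n x) :
    ∀ i j, i ≤ j → j < dd r n → x j ≤ x i := by
  intro i j hij hj
  induction j with
  | zero => simp_all
  | succ k ih =>
    rcases Nat.eq_or_lt_of_le hij with h1 | h1
    · rw [h1]
    · have h2 : i ≤ k := by omega
      exact le_trans (le_of_lt (h.2.1 k hj)) (ih h2 (by omega))

lemma good_eval {r n : ℕ} {x : ℕ → ℝ} (h : Good r n x) (t : ℝ) :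
    (Z r n).eval t = (Z r n).leadingCoeff * ∏ j ∈ Finset.range (dd r n), (t - x j) := by
  conv_lhs => rw [h.2.2]
  simp [Polynomial.eval_prod]

lemma good_root {r n : ℕ} {x : ℕ → ℝ} (h : Good r n x) {j : ℕ} (hj : j < dd r n) :
    (Z r n).eval (x j) = 0 := by
  rw [good_eval h]
  apply mul_eq_zero_of_right
  apply Finset.prod_eq_zero (Finset.mem_range.2 hj)
  simp

lemma good_sign {r n : ℕ} {x : ℕ → ℝ} (h : Good r n x) (t : ℝ) (k : ℕ) (hk : k ≤ dd r n)
    (h1 : ∀ j, j < k → t < x j) (h2 : ∀ j, k ≤ j → j < dd r n → x j < t) :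
    0 < (-1) ^ k * (Z r n).eval t := by
  have e1 : ∏ j ∈ Finset.range k, (t - x j) = (-1) ^ k * ∏ j ∈ Finset.range k, (x j - t) := by
    have e0 : ∀ j ∈ Finset.range k, t - x j = (-1) * (x j - t) := fun j _ => by ring
    rw [Finset.prod_congr rfl e0, Finset.prod_mul_distrib, Finset.prod_const, Finset.card_range]
  have hA : 0 < ∏ j ∈ Finset.range k, (x j - t) :=
    Finset.prod_pos (fun j hj => by have := h1 j (Finset.mem_range.1 hj); linarith)
  have hB : 0 < ∏ j ∈ Finset.Ico k (dd r n), (t - x j) :=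
    Finset.prod_pos (fun j hj => by
      obtain ⟨hj1, hj2⟩ := Finset.mem_Ico.1 hj
      have := h2 j hj1 hj2; linarith)
  have hl := Z_leadingCoeff_pos r n
  have e3 : ((-1 : ℝ)) ^ k * (-1) ^ k = 1 := by rw [← mul_pow]; norm_num
  have F : (Z r n).eval t = (Z r n).leadingCoeff * (((-1) ^ k * ∏ j ∈ Finset.range k, (x j - t))
      * ∏ j ∈ Finset.Ico k (dd r n), (t - x j)) := by
    rw [good_eval h, ← Finset.prod_range_mul_prod_Ico _ hk, e1]
    try ring
  rw [F, show (-1 : ℝ) ^ k * ((Z r n).leadingCoeff * (((-1) ^ k * ∏ j ∈ Finset.range k, (x j - t))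
      * ∏ j ∈ Finset.Ico k (dd r n), (t - x j)))
      = ((Z r n).leadingCoeff * ((∏ j ∈ Finset.range k, (x j - t))
        * ∏ j ∈ Finset.Ico k (dd r n), (t - x j))) * ((-1 : ℝ) ^ k * (-1) ^ k) from by ring,
    e3, mul_one]
  exact mul_pos hl (mul_pos hA hB)

end Zaux

namespace Zaux

lemma ivt_sign {p : Polynomial ℝ} {a b : ℝ} (hab : a < b) (h : p.eval a * p.eval b < 0) :
    ∃ t, a < t ∧ t < b ∧ p.eval t = 0 := by
  have cont : ContinuousOn (fun x => p.eval x) (Set.Icc a b) := (p.continuous).continuousOn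
  rcases lt_or_ge (p.eval a) 0 with ha | ha
  · have hb : 0 < p.eval b := by nlinarith
    have h0 : (0 : ℝ) ∈ Set.Ioo (p.eval a) (p.eval b) := ⟨ha, hb⟩
    obtain ⟨t, ht, h0t⟩ := intermediate_value_Ioo hab.le cont h0
    exact ⟨t, ht.1, ht.2, h0t⟩
  · have ha' : 0 < p.eval a := by
      rcases eq_or_lt_of_le ha with h1 | h1
      · exfalso; rw [← h1] at h; simp at h
      · exact h1
    have hb : p.eval b < 0 := by nlinarith
    have h0 : (0 : ℝ) ∈ Set.Ioo (p.eval b) (p.eval a) := ⟨hb, ha'⟩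
    obtain ⟨t, ht, h0t⟩ := intermediate_value_Ioo' hab.le cont h0
    exact ⟨t, ht.1, ht.2, h0t⟩

lemma exists_low (p : Polynomial ℝ) (hd : 0 < p.natDegree) (hlc : 0 < p.leadingCoeff) (u : ℝ) :
    ∃ B, B < u ∧ 0 < (-1) ^ p.natDegree * p.eval B := by
  set D := p.natDegree with hD
  set q : Polynomial ℝ := Polynomial.C ((-1 : ℝ) ^ D) * p.comp (-X) with hq
  have hcompd : (p.comp (-X)).natDegree = D := by
    rw [Polynomial.natDegree_comp]
    simp
    exact hD.symm
  have hql : q.leadingCoeff = p.leadingCoeff := by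
    rw [hq, Polynomial.leadingCoeff_mul, Polynomial.leadingCoeff_C,
      Polynomial.leadingCoeff_comp (by simp),
      show ((-X : Polynomial ℝ)).leadingCoeff = -1 from by simp, ← hD]
    rw [show (-1 : ℝ) ^ D * (p.leadingCoeff * (-1) ^ D)
      = p.leadingCoeff * ((-1 : ℝ) ^ D * (-1) ^ D) from by ring, ← mul_pow]
    norm_num
  have hqd : q.natDegree = D := by
    rw [hq, Polynomial.natDegree_C_mul (by positivity <;> simp : ((-1 : ℝ) ^ D) ≠ 0), hcompd]
  have hq0 : 0 < q.degree := by
    rw [Polynomial.degree_eq_natDegree (fun h0 => by simp [h0] at hql; exact absurd hql.symm (ne_of_gt hlc)), hqd]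
    exact_mod_cast hd
  have htend := Polynomial.tendsto_atTop_of_leadingCoeff_nonneg q hq0 (le_of_lt (hql ▸ hlc))
  obtain ⟨x, hx1, hx2⟩ := ((htend.eventually_ge_atTop 1).and (Filter.eventually_gt_atTop (-u))).exists
  refine ⟨-x, by linarith, ?_⟩
  have he : q.eval x = (-1 : ℝ) ^ D * p.eval (-x) := by
    rw [hq]
    simp [Polynomial.eval_comp]
  rw [← he]
  linarith

end Zaux

namespace Zaux

lemma anti_of_succ {D : ℕ} {y : ℕ → ℝ} (h : ∀ j, j + 1 < D → y (j + 1) < y j) :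
    ∀ i j, i < j → j < D → y j < y i := by
  intro i j hij hj
  induction j with
  | zero => omega
  | succ k ih =>
    rcases Nat.lt_or_ge i k with h1 | h1
    · exact lt_trans (h k hj) (ih h1 (by omega))
    · have : i = k := by omega
      subst this
      exact h i hj

lemma factor_of_roots {p : Polynomial ℝ} (hp : 0 < p.leadingCoeff) {D : ℕ} (hD : p.natDegree = D)
    (y : ℕ → ℝ) (hroot : ∀ j, j < D → p.eval (y j) = 0)
    (hanti : ∀ i j, i < j → j < D → y j < y i) :
    p = Polynomial.C p.leadingCoeff * ∏ j ∈ Finset.range D, (X - Polynomial.C (y j)) := by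
  classical
  have hp0 : p ≠ 0 := fun h => by simp [h] at hp
  set S : Multiset ℝ := (Finset.range D).val.map y with hS
  have hcard : Multiset.card S = D := by simp [hS]
  have hinj : ∀ a ∈ (Finset.range D).val, ∀ b ∈ (Finset.range D).val, y a = y b → a = b := by
    intro a ha b hb hab
    simp only [Finset.mem_range, ← Finset.mem_def] at ha hb
    by_contra hne
    rcases Nat.lt_or_ge a b with h1 | h1
    · exact absurd hab (ne_of_gt (hanti a b h1 hb))
    · have h2 : b < a := by omega
      exact absurd hab.symm (ne_of_gt (hanti b a h2 ha))
  have hnodup : S.Nodup := Multiset.Nodup.map_on hinj (Finset.range D).nodup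
  have hsub : S ≤ p.roots := by
    rw [Multiset.le_iff_count]
    intro a
    rcases Nat.eq_zero_or_pos (Multiset.count a S) with h0 | h0
    · simp [h0]
    · have haS : a ∈ S := Multiset.count_pos.1 h0
      obtain ⟨j, hj, hja⟩ := Multiset.mem_map.1 haS
      simp only [← Finset.mem_def, Finset.mem_range] at hj
      have : a ∈ p.roots := (Polynomial.mem_roots hp0).2 (by rw [← hja]; exact hroot j hj)
      have h1 : Multiset.count a S ≤ 1 := Multiset.nodup_iff_count_le_one.1 hnodup a
      have h2 : 1 ≤ Multiset.count a p.roots := Multiset.count_pos.2 this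
      omega
  have hre : p.roots = S := by
    refine (Multiset.eq_of_le_of_card_le hsub ?_).symm
    rw [hcard, ← hD]
    exact Polynomial.card_roots' p
  have hfac := Polynomial.C_leadingCoeff_mul_prod_multiset_X_sub_C (p := p) (by rw [hre, hcard, hD])
  rw [hre, hS, Multiset.map_map] at hfac
  rw [Finset.prod_eq_multiset_prod]
  exact hfac.symm

end Zaux

namespace Zaux

def Hist (r n : ℕ) (x : ℕ → ℕ → ℝ) : Prop :=
  (∀ m, m ≤ n → Good r m (x m)) ∧
  (∀ m, 1 ≤ m → m ≤ n → ∀ j, j < dd r (m - 1) → x (m - 1) j < x m j) ∧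
  (∀ m, m ≤ n → ∀ j, 1 ≤ j → j < dd r m → x m j < x (m - (r + 1)) (j - 1))

lemma sign_mul {a b : ℝ} {j : ℕ} (ha : 0 < (-1) ^ (j + 1) * a) (hb : 0 < (-1) ^ j * b) :
    a * b < 0 := by
  have h := mul_pos ha hb
  have e : ((-1 : ℝ) ^ (j + 1) * a) * ((-1) ^ j * b)
      = -(a * b) * ((-1 : ℝ) ^ j * (-1) ^ j) := by ring
  have e2 : ((-1 : ℝ)) ^ j * (-1) ^ j = 1 := by rw [← mul_pow]; norm_num
  rw [e, e2, mul_one] at h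
  linarith

theorem main (r : ℕ) (hr : 1 ≤ r) : ∀ n : ℕ, ∃ x : ℕ → ℕ → ℝ, Hist r n x := by
  intro n
  induction n with
  | zero =>
    have hd0 : dd r 0 = 0 := Nat.div_eq_of_lt_le (by omega) (by omega)
    refine ⟨fun _ _ => 0, ?_, ?_, ?_⟩
    · intro m hm
      have hm0 : m = 0 := by omega
      subst hm0
      refine ⟨?_, ?_, ?_⟩
      · intro j hj; rw [hd0] at hj; omega
      · intro j hj; rw [hd0] at hj; omega
      · rw [hd0]
        have hl : (Z r 0).leadingCoeff = 1 := by
          rw [Z_zero_eq]; simp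
        rw [hl, Z_zero_eq]
        simp
    · intro m hm1 hm2; omega
    · intro m hm j hj1 hj2
      have hm0 : m = 0 := by omega
      subst hm0
      rw [hd0] at hj2; omega
  | succ n ih =>
    obtain ⟨x, hG, hH2, hH3⟩ := ih
    set N := n + 1 with hN
    set q := r + 1 with hqdef
    -- degree abbreviations
    set D := dd r N with hD
    set D1 := dd r n with hD1def
    set Dq := dd r (N - q) with hDqdef
    have hDq : Dq = D - 1 := by rw [hDqdef, hD, dd_sub r N (by omega)]
    have hDpos : 1 ≤ D := dd_pos (by omega)
    have hD1le : D1 ≤ D := dd_mono r (by omega)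
    have hDle : D ≤ D1 + 1 := by
      have h1 : N + r ≤ n + r + q := by omega
      have h2 : (n + r + q) / q = (n + r) / q + 1 := Nat.add_div_right _ (by omega)
      have h3 : (N + r) / q ≤ (n + r + q) / q := Nat.div_le_div_right h1
      rw [h2] at h3
      exact h3
    have hdd0 : dd r 0 = 0 := Nat.div_eq_of_lt_le (by omega) (by omega)
    have G1 : Good r n (x n) := hG n le_rfl
    have Gq : Good r (N - q) (x (N - q)) := hG _ (by omega)
    -- monotonicity chains
    have chain : ∀ m1 m2, m1 ≤ m2 → m2 ≤ n → ∀ j, j < dd r m1 → x m1 j ≤ x m2 j := by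
      intro m1 m2 h12 h2n j hj
      induction m2 with
      | zero =>
        have : m1 = 0 := by omega
        subst this; rfl
      | succ k ihk =>
        rcases Nat.eq_or_lt_of_le h12 with h1 | h1
        · rw [h1]
        · have h2 : m1 ≤ k := by omega
          have h3 : x m1 j ≤ x k j := ihk h2 (by omega)
          have h4 : x k j < x (k + 1) j := by
            have := hH2 (k + 1) (by omega) h2n j
            simp only [Nat.add_sub_cancel] at this
            exact this (lt_of_lt_of_le hj (dd_mono r h2))
          linarith
    have chainlt : ∀ m1 m2, m1 < m2 → m2 ≤ n → ∀ j, j < dd r m1 → x m1 j < x m2 j := by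
      intro m1 m2 h12 h2n j hj
      have h1 : x m1 j ≤ x (m2 - 1) j := chain m1 (m2 - 1) (by omega) (by omega) j hj
      have h2 : x (m2 - 1) j < x m2 j := by
        have := hH2 m2 (by omega) h2n j
        exact this (lt_of_lt_of_le hj (dd_mono r (by omega)))
      linarith
    -- interlacing between x n and x (N - q)
    have I1 : ∀ j, j < Dq → x (N - q) j < x n j := by
      intro j hj
      have hNq1 : 1 ≤ N - q := by
        by_contra h
        have h0 : N - q = 0 := by omega
        rw [hDqdef, h0, hdd0] at hj
        omega
      exact chainlt (N - q) n (by omega) le_rfl j hj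
    have I2 : ∀ j, 1 ≤ j → j < D1 → x n j < x (N - q) (j - 1) := by
      intro j hj1 hj2
      have hn1 : 1 ≤ n := by
        by_contra h
        have h0 : n = 0 := by omega
        rw [hD1def, h0, hdd0] at hj2
        omega
      have hsub : dd r (n - q) = D1 - 1 := by rw [hD1def, dd_sub r n hn1]
      have h1 : x n j < x (n - q) (j - 1) := hH3 n le_rfl j hj1 hj2
      have h2 : x (n - q) (j - 1) ≤ x (N - q) (j - 1) := by
        apply chain (n - q) (N - q) (by omega) (by omega)
        rw [hsub]; omega
      linarith
    -- upper endpoints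
    set u : ℕ → ℝ := fun j => if j = 0 then 0 else x (N - q) (j - 1) with hu
    have hrecN : Z r N = Z r n + X * Z r (N - q) := by
      have := Z_rec r N (by omega)
      rw [show N - 1 = n from by omega] at this
      exact this
    have evalN : ∀ t : ℝ, (Z r N).eval t = (Z r n).eval t + t * (Z r (N - q)).eval t := by
      intro t
      rw [hrecN]
      simp [mul_comm]
    -- sign at upper endpoints
    have SU : ∀ j, j < D → 0 < (-1 : ℝ) ^ j * (Z r N).eval (u j) := by
      intro j hj
      rcases Nat.eq_zero_or_pos j with h0 | h0
      · subst h0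
        rw [hu]
        simp [Z_eval_zero]
      · obtain ⟨i, hi⟩ : ∃ i, j = i + 1 := ⟨j - 1, by omega⟩
        subst hi
        have hiDq : i < Dq := by omega
        have huj : u (i + 1) = x (N - q) i := by rw [hu]; simp
        rw [huj]
        have hz : (Z r (N - q)).eval (x (N - q) i) = 0 := good_root Gq hiDq
        have he : (Z r N).eval (x (N - q) i) = (Z r n).eval (x (N - q) i) := by
          rw [evalN, hz]; ring
        rw [he]
        apply good_sign G1 _ (i + 1) (by omega)
        · intro l hl
          have h1 : x n i ≤ x n l := good_anti G1 l i (by omega) (by omega)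
          have h2 : x (N - q) i < x n i := I1 i hiDq
          linarith
        · intro l hl1 hl2
          have h1 : x n l ≤ x n (i + 1) := good_anti G1 (i + 1) l hl1 hl2
          have h2 : x n (i + 1) < x (N - q) i := by
            have := I2 (i + 1) (by omega) (by omega)
            simpa using this
          linarith
    -- sign at lower endpoints
    have SL : ∀ j, j < D1 → 0 < (-1 : ℝ) ^ (j + 1) * (Z r N).eval (x n j) := by
      intro j hj
      have hz : (Z r n).eval (x n j) = 0 := good_root G1 hj
      have he : (Z r N).eval (x n j) = (x n j) * (Z r (N - q)).eval (x n j) := by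
        rw [evalN, hz]; ring
      have hq0 : 0 < (-1 : ℝ) ^ j * (Z r (N - q)).eval (x n j) := by
        apply good_sign Gq _ j (by omega)
        · intro l hl
          have h1 : x (N - q) (j - 1) ≤ x (N - q) l := good_anti Gq l (j - 1) (by omega) (by omega)
          have h2 : x n j < x (N - q) (j - 1) := I2 j (by omega) hj
          linarith
        · intro l hl1 hl2
          have h1 : x (N - q) l ≤ x (N - q) j := good_anti Gq j l hl1 hl2
          have h2 : x (N - q) j < x n j := I1 j (by omega)
          linarith
      have hneg : x n j < 0 := G1.1 j hj
      rw [he]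
      have e : (-1 : ℝ) ^ (j + 1) * (x n j * (Z r (N - q)).eval (x n j))
          = (-(x n j)) * ((-1 : ℝ) ^ j * (Z r (N - q)).eval (x n j)) := by ring
      rw [e]
      exact mul_pos (by linarith) hq0
    -- bottom point
    obtain ⟨B, hBu, hBs⟩ := exists_low (Z r N)
      (by rw [Z_natDegree]; omega) (Z_leadingCoeff_pos r N) (u (D - 1))
    rw [Z_natDegree] at hBs
    -- construct roots
    have hex : ∀ j : ℕ, ∃ v : ℝ, j < D →
        ((Z r N).eval v = 0 ∧ v < u j ∧ (j < D1 → x n j < v)) := by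
      intro j
      by_cases hj : j < D
      · rcases Nat.lt_or_ge j D1 with hj1 | hj1
        · -- interval (x n j, u j)
          have hlo : x n j < u j := by
            rcases Nat.eq_zero_or_pos j with h0 | h0
            · subst h0; rw [hu]; simpa using G1.1 0 hj1
            · rw [hu]
              simp only [if_neg (by omega : ¬ j = 0)]
              exact I2 j h0 hj1
          obtain ⟨t, ht1, ht2, ht3⟩ := ivt_sign hlo (sign_mul (SL j hj1) (SU j hj))
          exact ⟨t, fun _ => ⟨ht3, ht2, fun _ => ht1⟩⟩
        · -- bottom interval (B, u j), here j = D - 1 and D1 = D - 1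
          have hjD : j = D - 1 := by omega
          have hDj : D = j + 1 := by omega
          have hBs' : 0 < (-1 : ℝ) ^ (j + 1) * (Z r N).eval B := by rw [← hDj]; exact hBs
          have hBu' : B < u j := by rw [hjD]; exact hBu
          obtain ⟨t, ht1, ht2, ht3⟩ := ivt_sign hBu' (sign_mul hBs' (SU j hj))
          exact ⟨t, fun _ => ⟨ht3, ht2, fun h => absurd h (by omega)⟩⟩
      · exact ⟨0, fun h => absurd h hj⟩
    choose y hy using hex
    -- properties of y
    have yneg : ∀ j, j < D → y j < 0 := by
      intro j hj
      have h1 := (hy j hj).2.1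
      rcases Nat.eq_zero_or_pos j with h0 | h0
      · subst h0; rw [hu] at h1; simpa using h1
      · have h2 : u j = x (N - q) (j - 1) := by rw [hu]; simp [Nat.pos_iff_ne_zero.1 h0]
        have h3 : x (N - q) (j - 1) < 0 := Gq.1 (j - 1) (by omega)
        rw [h2] at h1
        linarith
    have ydec : ∀ j, j + 1 < D → y (j + 1) < y j := by
      intro j hj
      have h1 := (hy (j + 1) hj).2.1
      have h2 : u (j + 1) = x (N - q) j := by rw [hu]; simp
      have h3 : x (N - q) j < x n j := I1 j (by omega)
      have h4 : x n j < y j := (hy j (by omega)).2.2 (by omega)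
      rw [h2] at h1
      linarith
    have yanti : ∀ i j, i < j → j < D → y j < y i := anti_of_succ ydec
    have yroot : ∀ j, j < D → (Z r N).eval (y j) = 0 := fun j hj => (hy j hj).1
    have Zfac : Z r N = Polynomial.C ((Z r N).leadingCoeff)
        * ∏ j ∈ Finset.range D, (X - Polynomial.C (y j)) :=
      factor_of_roots (Z_leadingCoeff_pos r N) (Z_natDegree r N) y yroot yanti
    have GN : Good r N y := ⟨yneg, fun j hj => ydec j hj, Zfac⟩
    -- assemble new history
    refine ⟨Function.update x N y, ?_, ?_, ?_⟩
    · intro m hm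
      rcases Nat.eq_or_lt_of_le hm with h1 | h1
      · rw [h1, Function.update_self]
        exact GN
      · rw [Function.update_of_ne (by omega)]
        exact hG m (by omega)
    · intro m hm1 hm2 j hj
      rcases Nat.eq_or_lt_of_le hm2 with h1 | h1
      · subst h1
        rw [Function.update_self, Function.update_of_ne (by omega)]
        rw [show N - 1 = n from by omega] at hj ⊢
        exact (hy j (by omega)).2.2 hj
      · rw [Function.update_of_ne (by omega), Function.update_of_ne (by omega)]
        exact hH2 m hm1 (by omega) j hj
    · intro m hm j hj1 hj2
      rcases Nat.eq_or_lt_of_le hm with h1 | h1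
      · subst h1
        rw [Function.update_self, Function.update_of_ne (by omega)]
        have h2 := (hy j hj2).2.1
        have h3 : u j = x (N - q) (j - 1) := by rw [hu]; simp [Nat.pos_iff_ne_zero.1 hj1]
        rw [h3] at h2
        exact h2
      · rw [Function.update_of_ne (by omega), Function.update_of_ne (by omega)]
        exact hH3 m (by omega) j hj1 hj2

end Zaux

/-- Theorem 1: For every integer `r ≥ 1` and every `n ≥ 1`, all complex zeros
of the polynomial `Z_n` are real and negative. -/
theorem Z_zeros_real_neg (r : ℕ) (hr : 1 ≤ r) (n : ℕ) (hn : 1 ≤ n) (z : ℂ)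
    (hz : ((Z r n).map (algebraMap ℝ ℂ)).IsRoot z) :
    ∃ x : ℝ, x < 0 ∧ (x : ℂ) = z := by
  obtain ⟨x, hHist⟩ := Zaux.main r hr n
  have G := hHist.1 n le_rfl
  have hfac := G.2.2
  have hc := Zaux.Z_leadingCoeff_pos r n
  rw [hfac, Polynomial.map_mul, Polynomial.map_C, Polynomial.map_prod] at hz
  simp only [Polynomial.map_sub, Polynomial.map_X, Polynomial.map_C, Polynomial.IsRoot,
    Polynomial.eval_mul, Polynomial.eval_C, Polynomial.eval_prod, Polynomial.eval_sub,
    Polynomial.eval_X] at hz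
  have hcne : (algebraMap ℝ ℂ) ((Z r n).leadingCoeff) ≠ 0 := by
    simpa using ne_of_gt hc
  have hprod : ∏ j ∈ Finset.range (Zaux.dd r n), (z - (algebraMap ℝ ℂ) (x n j)) = 0 := by
    rcases mul_eq_zero.1 hz with h | h
    · exact absurd h hcne
    · exact h
  obtain ⟨j, hjmem, hj0⟩ := Finset.prod_eq_zero_iff.1 hprod
  refine ⟨x n j, G.1 j (Finset.mem_range.1 hjmem), ?_⟩
  have h1 : z = (algebraMap ℝ ℂ) (x n j) := by
    have := sub_eq_zero.1 hj0
    exact this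
  rw [h1]
  simp
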